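/- arXiv:1402.4734 — 6 statements merged into one kernel-verified Lean document; each statement's English description precedes it below -/
import Mathlib

section
/- For every unit vector n = (n₁, n₂, n₃) ∈ ℝ³ with n₃ > −1 and every b ∈ ℝ², the map V(n) preserves the Euclidean norm: ‖V(n) b‖ = ‖b‖. (This is flow hypothesis (ii) for the discrete velocity field: the magnitude of the induced velocity on each face equals the magnitude of the master velocity.) -/
/-- The discrete velocity field matrix of equation (2.6): sends a master
velocity `b` on the horizontal plane to the induced velocity on a face with
outer unit normal `n`. -/
noncomputable def Vmap (n : EuclideanSpace ℝ (Fin 3)) (b : EuclideanSpace ℝ (Fin 2)) :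
    EuclideanSpace ℝ (Fin 3) :=
  WithLp.toLp 2 ![b 0 - n 0 * (n 0 * b 0 + n 1 * b 1) / (1 + n 2),
    b 1 - n 1 * (n 0 * b 0 + n 1 * b 1) / (1 + n 2),
    n 0 * b 0 + n 1 * b 1]

/-- Flow hypothesis (ii): the induced velocity has the same magnitude as the
master velocity. -/
theorem stmt0 (n : EuclideanSpace ℝ (Fin 3)) (hn : ‖n‖ = 1) (h3 : -1 < n 2)
    (b : EuclideanSpace ℝ (Fin 2)) : ‖Vmap n b‖ = ‖b‖ := by
  have hd : (1 : ℝ) + n 2 ≠ 0 := by linarith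
  have key : n 0 ^ 2 + n 1 ^ 2 + n 2 ^ 2 = 1 := by
    have := hn
    rw [EuclideanSpace.norm_eq] at this
    have h2 : Real.sqrt (∑ i : Fin 3, n i ^ 2) = 1 := by
      simpa [sq_abs] using this
    have := Real.sqrt_eq_one.mp h2
    simpa [Fin.sum_univ_three] using this
  rw [EuclideanSpace.norm_eq, EuclideanSpace.norm_eq]
  congr 1
  simp only [Fin.sum_univ_three, Fin.sum_univ_two, Real.norm_eq_abs, sq_abs, Vmap]
  simp only [Matrix.cons_val_zero, Matrix.cons_val_one, Matrix.head_cons,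
    Matrix.cons_val_two, Matrix.tail_cons]
  field_simp
  ring_nf
  nlinarith [key, sq_nonneg (n 0 * b 0 + n 1 * b 1), sq_nonneg (1 + n 2)]
end

section
/- Let ι be a nonempty finite index set, n : ι → ℝ³ a family of unit vectors each with strictly positive third coordinate, b ∈ ℝ² a unit vector, and w : ι → ℝ a family of strictly positive weights. Then the inner product of the horizontal projection of Σ_{i ∈ ι} w(i) • V(n(i)) b with b is strictly positive; in particular Σ_{i ∈ ι} w(i) • V(n(i)) b ≠ 0. -/
open scoped RealInnerProductSpace

/-- Horizontal projection of a vector in `ℝ³`. -/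
noncomputable def hproj (x : EuclideanSpace ℝ (Fin 3)) : EuclideanSpace ℝ (Fin 2) :=
  WithLp.toLp 2 ![x 0, x 1]

/-- Each induced velocity's horizontal projection makes a positive inner product
with the master direction. -/
lemma Vmap_key (n : EuclideanSpace ℝ (Fin 3)) (hn : ‖n‖ = 1) (hn3 : 0 < n 2)
    (b : EuclideanSpace ℝ (Fin 2)) (hb : ‖b‖ = 1) :
    0 < Vmap n b 0 * b 0 + Vmap n b 1 * b 1 := by
  have hn' : n 0 ^ 2 + n 1 ^ 2 + n 2 ^ 2 = 1 := by
    have h := hn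
    rw [EuclideanSpace.norm_eq] at h
    have h2 : (∑ i, ‖n i‖ ^ 2) = 1 := by
      rw [Real.sqrt_eq_one] at h; exact h
    simpa [Fin.sum_univ_three, Real.norm_eq_abs, sq_abs] using h2
  have hb' : b 0 ^ 2 + b 1 ^ 2 = 1 := by
    have h := hb
    rw [EuclideanSpace.norm_eq] at h
    have h2 : (∑ i, ‖b i‖ ^ 2) = 1 := by
      rw [Real.sqrt_eq_one] at h; exact h
    simpa [Fin.sum_univ_two, Real.norm_eq_abs, sq_abs] using h2
  have h1 : (0:ℝ) < 1 + n 2 := by linarith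
  simp only [Vmap, PiLp.toLp_apply]
  simp only [Matrix.cons_val_zero, Matrix.cons_val_one, Matrix.head_cons]
  have key : (n 0 * b 0 + n 1 * b 1) ^ 2 < 1 + n 2 := by
    nlinarith [sq_nonneg (n 0 * b 1 - n 1 * b 0), sq_nonneg (n 2), hn3]
  have expand : (b 0 - n 0 * (n 0 * b 0 + n 1 * b 1) / (1 + n 2)) * b 0 +
      (b 1 - n 1 * (n 0 * b 0 + n 1 * b 1) / (1 + n 2)) * b 1
      = 1 - (n 0 * b 0 + n 1 * b 1) ^ 2 / (1 + n 2) := by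
    field_simp
    linear_combination (1 + n 2) * hb'
  rw [expand]
  have := (div_lt_one h1).mpr key
  linarith

/-- The weighted average of the induced velocities has horizontal projection
making a positive inner product with the master direction; in particular the
average is nonzero. -/
theorem stmt2 {ι : Type*} [Fintype ι] [Nonempty ι]
    (n : ι → EuclideanSpace ℝ (Fin 3)) (hn : ∀ i, ‖n i‖ = 1) (hn3 : ∀ i, 0 < n i 2)
    (b : EuclideanSpace ℝ (Fin 2)) (hb : ‖b‖ = 1)
    (w : ι → ℝ) (hw : ∀ i, 0 < w i) :
    0 < ⟪hproj (∑ i, w i • Vmap (n i) b), b⟫ ∧ (∑ i, w i • Vmap (n i) b) ≠ 0 := by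
  have hpos : 0 < ⟪hproj (∑ i, w i • Vmap (n i) b), b⟫ := by
    have hinner : ⟪hproj (∑ i, w i • Vmap (n i) b), b⟫ =
        ∑ i, w i * (Vmap (n i) b 0 * b 0 + Vmap (n i) b 1 * b 1) := by
      simp only [hproj, PiLp.toLp_apply, PiLp.inner_apply, RCLike.inner_apply, conj_trivial,
        Fin.sum_univ_two, Matrix.cons_val_zero, Matrix.cons_val_one, Matrix.head_cons]
      have h0 : (∑ i, w i • Vmap (n i) b) 0 = ∑ i, w i * Vmap (n i) b 0 := by
        rw [WithLp.ofLp_sum, Finset.sum_apply]; rfl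
      have h1 : (∑ i, w i • Vmap (n i) b) 1 = ∑ i, w i * Vmap (n i) b 1 := by
        rw [WithLp.ofLp_sum, Finset.sum_apply]; rfl
      rw [h0, h1, Finset.mul_sum, Finset.mul_sum, ← Finset.sum_add_distrib]
      congr 1; ext i; ring
    rw [hinner]
    exact Finset.sum_pos (fun i _ => mul_pos (hw i)
      (Vmap_key (n i) (hn i) (hn3 i) b hb)) Finset.univ_nonempty
  refine ⟨hpos, fun h => ?_⟩
  rw [h] at hpos
  simp [hproj, PiLp.inner_apply, Fin.sum_univ_two] at hpos
end

section
/- (Lemma 2.1(i).) Let ι be a nonempty finite index set, n : ι → ℝ³ a family of unit vectors each with strictly positive third coordinate, and w : ι → ℝ a family of strictly positive weights. Then the linear map L : ℝ² → ℝ³ defined by L b = Σ_{i ∈ ι} w(i) • V(n(i)) b has trivial kernel, i.e., L b = 0 implies b = 0. -/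
lemma key (n0 n1 n2 b0 b1 : ℝ) (hnorm : n0 ^ 2 + n1 ^ 2 + n2 ^ 2 = 1)
    (ht : 0 < n2) (hb : 0 < b0 ^ 2 + b1 ^ 2) :
    0 < b0 * (b0 - n0 * (n0 * b0 + n1 * b1) / (1 + n2)) +
        b1 * (b1 - n1 * (n0 * b0 + n1 * b1) / (1 + n2)) := by
  have h1 : (0:ℝ) < 1 + n2 := by linarith
  have key : 0 < (b0 * ((b0 * (1 + n2) - n0 * (n0 * b0 + n1 * b1))) +
      b1 * ((b1 * (1 + n2) - n1 * (n0 * b0 + n1 * b1)))) := by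
    nlinarith [sq_nonneg (n0 * b1 - n1 * b0), sq_nonneg (n0 * b0 + n1 * b1)]
  have := div_pos key h1
  calc (0:ℝ) < (b0 * ((b0 * (1 + n2) - n0 * (n0 * b0 + n1 * b1))) +
      b1 * ((b1 * (1 + n2) - n1 * (n0 * b0 + n1 * b1)))) / (1 + n2) := this
    _ = b0 * (b0 - n0 * (n0 * b0 + n1 * b1) / (1 + n2)) +
        b1 * (b1 - n1 * (n0 * b0 + n1 * b1) / (1 + n2)) := by field_simp

/-- Lemma 2.1(i): the averaging operator composed with the global velocity
field has trivial kernel. -/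
theorem stmt3 {ι : Type*} [Fintype ι] [Nonempty ι]
    (n : ι → EuclideanSpace ℝ (Fin 3)) (hn : ∀ i, ‖n i‖ = 1) (hn3 : ∀ i, 0 < n i 2)
    (w : ι → ℝ) (hw : ∀ i, 0 < w i) :
    ∀ b : EuclideanSpace ℝ (Fin 2), (∑ i, w i • Vmap (n i) b) = 0 → b = 0 := by
  intro b h
  by_contra hb
  obtain ⟨j, hj⟩ : ∃ j, b j ≠ 0 := by
    by_contra hc; push_neg at hc; exact hb (by ext j; exact hc j)
  have hbpos : 0 < b 0 ^ 2 + b 1 ^ 2 := by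
    fin_cases j <;> simp at hj <;> positivity
  have hnorm : ∀ i, n i 0 ^ 2 + n i 1 ^ 2 + n i 2 ^ 2 = 1 := by
    intro i
    have := hn i
    rw [EuclideanSpace.norm_eq] at this
    have h2 : (∑ j, n i j ^ 2) = 1 := by
      have := congrArg (· ^ 2) this
      simpa [Real.sq_sqrt (Finset.sum_nonneg fun j _ => sq_nonneg (n i j))] using this
    simpa [Fin.sum_univ_three] using h2
  have hsa : ∀ (f : ι → EuclideanSpace ℝ (Fin 3)) (j : Fin 3),
      (∑ i, f i) j = ∑ i, f i j := fun f j => by simp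
  have h0 : (∑ i, w i • Vmap (n i) b) 0 = (0 : EuclideanSpace ℝ (Fin 3)) 0 := by rw [h]
  have h1 : (∑ i, w i • Vmap (n i) b) 1 = (0 : EuclideanSpace ℝ (Fin 3)) 1 := by rw [h]
  rw [hsa] at h0 h1
  simp only [PiLp.smul_apply, smul_eq_mul, Vmap, PiLp.toLp_apply, Matrix.cons_val_zero, Matrix.cons_val_one,
    Matrix.head_cons] at h0 h1
  have hzero : (0 : EuclideanSpace ℝ (Fin 3)) 0 = 0 := rfl
  have hzero1 : (0 : EuclideanSpace ℝ (Fin 3)) 1 = 0 := rfl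
  rw [hzero] at h0
  rw [hzero1] at h1
  have hsum : (∑ i, w i * (b 0 * (b 0 - n i 0 * (n i 0 * b 0 + n i 1 * b 1) / (1 + n i 2)) +
      b 1 * (b 1 - n i 1 * (n i 0 * b 0 + n i 1 * b 1) / (1 + n i 2)))) = 0 := by
    have : (∑ i, w i * (b 0 * (b 0 - n i 0 * (n i 0 * b 0 + n i 1 * b 1) / (1 + n i 2)) +
        b 1 * (b 1 - n i 1 * (n i 0 * b 0 + n i 1 * b 1) / (1 + n i 2))))
        = b 0 * (∑ i, w i * (b 0 - n i 0 * (n i 0 * b 0 + n i 1 * b 1) / (1 + n i 2)))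
        + b 1 * (∑ i, w i * (b 1 - n i 1 * (n i 0 * b 0 + n i 1 * b 1) / (1 + n i 2))) := by
      rw [Finset.mul_sum, Finset.mul_sum, ← Finset.sum_add_distrib]
      exact Finset.sum_congr rfl fun i _ => by ring
    rw [this, h0, h1]; ring
  have hpos : 0 < ∑ i, w i * (b 0 * (b 0 - n i 0 * (n i 0 * b 0 + n i 1 * b 1) / (1 + n i 2)) +
      b 1 * (b 1 - n i 1 * (n i 0 * b 0 + n i 1 * b 1) / (1 + n i 2))) := by
    apply Finset.sum_pos
    · intro i _
      exact mul_pos (hw i) (key _ _ _ _ _ (hnorm i) (hn3 i) hbpos)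
    · exact Finset.univ_nonempty
  linarith
end

section
/- (Lemma 2.1(ii).) Let ι be a nonempty finite index set, n : ι → ℝ³ a family of unit vectors each with strictly positive third coordinate, and w : ι → ℝ a family of strictly positive weights. Then the range of the linear map L : ℝ² → ℝ³ defined by L b = Σ_{i ∈ ι} w(i) • V(n(i)) b is a two-dimensional subspace of ℝ³, i.e., its rank equals 2. -/
lemma vmap_key (n : EuclideanSpace ℝ (Fin 3)) (hn : ‖n‖ = 1) (h3 : 0 < n 2)
    (b : EuclideanSpace ℝ (Fin 2)) :
    n 2 * (b 0 ^ 2 + b 1 ^ 2) ≤ Vmap n b 0 * b 0 + Vmap n b 1 * b 1 := by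
  have h1 : n 0 ^ 2 + n 1 ^ 2 + n 2 ^ 2 = 1 := by
    have h := hn
    rw [EuclideanSpace.norm_eq, Fin.sum_univ_three, Real.sqrt_eq_one] at h
    simpa [sq_abs] using h
  have ha : (0:ℝ) < 1 + n 2 := by linarith
  have hcs : (n 0 * b 0 + n 1 * b 1) ^ 2 ≤ (1 - n 2 ^ 2) * (b 0 ^ 2 + b 1 ^ 2) := by
    nlinarith [sq_nonneg (n 0 * b 1 - n 1 * b 0)]
  have hdiv : (n 0 * b 0 + n 1 * b 1) ^ 2 / (1 + n 2) ≤ (1 - n 2) * (b 0 ^ 2 + b 1 ^ 2) := by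
    rw [div_le_iff₀ ha]
    nlinarith
  have heq : Vmap n b 0 * b 0 + Vmap n b 1 * b 1
      = (b 0 ^ 2 + b 1 ^ 2) - (n 0 * b 0 + n 1 * b 1) ^ 2 / (1 + n 2) := by
    simp only [Vmap, PiLp.toLp_apply, Matrix.cons_val_zero, Matrix.cons_val_one, Matrix.head_cons]
    field_simp
    ring
  rw [heq]
  linarith [hdiv]

/-- Lemma 2.1(ii): the range of the averaging operator composed with the
global velocity field is a two-dimensional subspace of `ℝ³`. -/
theorem stmt4 {ι : Type*} [Fintype ι] [Nonempty ι]
    (n : ι → EuclideanSpace ℝ (Fin 3)) (hn : ∀ i, ‖n i‖ = 1) (hn3 : ∀ i, 0 < n i 2)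
    (w : ι → ℝ) (hw : ∀ i, 0 < w i)
    (L : EuclideanSpace ℝ (Fin 2) →ₗ[ℝ] EuclideanSpace ℝ (Fin 3))
    (hL : ∀ b, L b = ∑ i, w i • Vmap (n i) b) :
    Module.finrank ℝ (LinearMap.range L) = 2 := by
  have hinj : Function.Injective L := by
    rw [← LinearMap.ker_eq_bot, LinearMap.ker_eq_bot']
    intro b hb
    have hLb : (∀ j, (L b) j = 0) := by
      intro j; rw [hb]; rfl
    have hcomp : ∀ j : Fin 3, ∑ i, w i * Vmap (n i) b j = 0 := by
      intro j
      have h := hb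
      rw [hL] at h
      have h2 := congrArg (EuclideanSpace.proj (𝕜 := ℝ) j) h
      simpa [map_sum, smul_eq_mul] using h2
    have hsum : ∑ i, w i * (Vmap (n i) b 0 * b 0 + Vmap (n i) b 1 * b 1) = 0 := by
      have h0 := hcomp 0
      have h1 := hcomp 1
      calc ∑ i, w i * (Vmap (n i) b 0 * b 0 + Vmap (n i) b 1 * b 1)
          = (∑ i, w i * Vmap (n i) b 0) * b 0 + (∑ i, w i * Vmap (n i) b 1) * b 1 := by
            rw [Finset.sum_mul, Finset.sum_mul, ← Finset.sum_add_distrib]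
            congr 1; ext i; ring
        _ = 0 := by rw [h0, h1]; ring
    set B := b 0 ^ 2 + b 1 ^ 2 with hB
    have hge : (∑ i, w i * n i 2) * B ≤ 0 := by
      rw [← hsum, Finset.sum_mul]
      apply Finset.sum_le_sum
      intro i _
      have := vmap_key (n i) (hn i) (hn3 i) b
      have hwi := (hw i).le
      calc w i * n i 2 * B = w i * (n i 2 * B) := by ring
        _ ≤ w i * (Vmap (n i) b 0 * b 0 + Vmap (n i) b 1 * b 1) := by
            exact mul_le_mul_of_nonneg_left this hwi
    have hpos : 0 < ∑ i, w i * n i 2 :=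
      Finset.sum_pos (fun i _ => mul_pos (hw i) (hn3 i)) Finset.univ_nonempty
    have hBnonneg : 0 ≤ B := by positivity
    have hB0 : B = 0 := by nlinarith
    have hb0 : b 0 = 0 := by nlinarith [sq_nonneg (b 0), sq_nonneg (b 1)]
    have hb1 : b 1 = 0 := by nlinarith [sq_nonneg (b 0), sq_nonneg (b 1)]
    ext j
    fin_cases j <;> simpa
  rw [LinearMap.finrank_range_of_inj hinj]
  simp
end

section
/- (Proposition 4.2(i).) Let θ ∈ (0, π) and c > 0, and let Δ ⊆ ℝ² be the closed triangle with vertices (0,0), (1,0) and c·(cos θ, sin θ). Let t₀ ∈ (θ, π) be the unique angle such that (cos t₀, sin t₀) is a positive scalar multiple of c·(cos θ, sin θ) − (1, 0). Then the parametrized inner-segment length function χ(t) = d(Δ, (cos t, sin t)) satisfies: χ(t) = c·sin θ / (c·sin(θ − t) + sin t) for t ∈ [0, θ]; χ(t) = c·sin θ / sin t for t ∈ [θ, t₀]; and χ(t) = sin θ / sin(t − θ) for t ∈ [t₀, π]. -/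
/-- The inner-segment length `d(Δ, u)`: the supremum of lengths `r ≥ 0` such
that some segment of the form `[x, x + r • u]` is contained in `Δ`. -/
noncomputable def innerSegLen (Δ : Set (EuclideanSpace ℝ (Fin 2)))
    (u : EuclideanSpace ℝ (Fin 2)) : ℝ :=
  sSup {r : ℝ | 0 ≤ r ∧ ∃ x, segment ℝ x (x + r • u) ⊆ Δ}

private lemma convex_strip (α β m M : ℝ) :
    Convex ℝ {p : EuclideanSpace ℝ (Fin 2) | α * p 0 + β * p 1 ∈ Set.Icc m M} := by
  intro p hp q hq a b ha hb hab
  simp only [Set.mem_setOf_eq, Set.mem_Icc] at hp hq ⊢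
  have h : α * (a • p + b • q) 0 + β * (a • p + b • q) 1
      = a * (α * p 0 + β * p 1) + b * (α * q 0 + β * q 1) := by
    simp [PiLp.add_apply, PiLp.smul_apply]; ring
  rw [h]
  have hM : a * M + b * M = M := by rw [← add_mul, hab, one_mul]
  have hm : a * m + b * m = m := by rw [← add_mul, hab, one_mul]
  constructor <;>
    linarith [mul_le_mul_of_nonneg_left hp.2 ha, mul_le_mul_of_nonneg_left hq.2 hb,
      mul_le_mul_of_nonneg_left hp.1 ha, mul_le_mul_of_nonneg_left hq.1 hb]

private lemma innerSegLen_master (Δ : Set (EuclideanSpace ℝ (Fin 2))) (hΔ : Convex ℝ Δ)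
    (u : EuclideanSpace ℝ (Fin 2)) (α β m M r : ℝ)
    (hfΔ : ∀ p ∈ Δ, α * p 0 + β * p 1 ∈ Set.Icc m M)
    (hD : 0 < α * u 0 + β * u 1)
    (hr : r * (α * u 0 + β * u 1) = M - m) (hr0 : 0 ≤ r)
    (x : EuclideanSpace ℝ (Fin 2)) (hx : x ∈ Δ) (hx' : x + r • u ∈ Δ) :
    innerSegLen Δ u = r := by
  have hmem : r ∈ {s : ℝ | 0 ≤ s ∧ ∃ y, segment ℝ y (y + s • u) ⊆ Δ} :=
    ⟨hr0, x, hΔ.segment_subset hx hx'⟩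
  have hub : ∀ s ∈ {s : ℝ | 0 ≤ s ∧ ∃ y, segment ℝ y (y + s • u) ⊆ Δ}, s ≤ r := by
    rintro s ⟨hs0, y, hy⟩
    have h1 := hfΔ y (hy (left_mem_segment ℝ _ _))
    have h2 := hfΔ _ (hy (right_mem_segment ℝ _ _))
    have key : α * (y + s • u) 0 + β * (y + s • u) 1
        = (α * y 0 + β * y 1) + s * (α * u 0 + β * u 1) := by
      simp [PiLp.add_apply, PiLp.smul_apply]; ring
    simp only [Set.mem_Icc] at h1 h2
    have hsD : s * (α * u 0 + β * u 1) ≤ r * (α * u 0 + β * u 1) := by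
      rw [hr]; linarith [h1.1, h2.2, key.symm.trans_le h2.2]
    exact le_of_mul_le_mul_right hsD hD
  exact IsGreatest.csSup_eq ⟨hmem, hub⟩

set_option maxHeartbeats 1000000 in
/-- Proposition 4.2(i): explicit piecewise form of the parametrized
inner-segment length function of a triangle in the family 𝒞. -/
theorem stmt12 (θ c : ℝ) (hθ : θ ∈ Set.Ioo 0 Real.pi) (hc : 0 < c)
    (t₀ : ℝ) (ht₀ : t₀ ∈ Set.Ioo θ Real.pi)
    (ht₀' : ∃ k : ℝ, 0 < k ∧
      (!₂[Real.cos t₀, Real.sin t₀] : EuclideanSpace ℝ (Fin 2)) =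
        k • (c • (!₂[Real.cos θ, Real.sin θ] : EuclideanSpace ℝ (Fin 2)) -
          (!₂[1, 0] : EuclideanSpace ℝ (Fin 2)))) :
    (∀ t ∈ Set.Icc 0 θ,
      innerSegLen (convexHull ℝ
          ({!₂[0, 0], !₂[1, 0], c • !₂[Real.cos θ, Real.sin θ]} :
            Set (EuclideanSpace ℝ (Fin 2))))
        !₂[Real.cos t, Real.sin t] =
        c * Real.sin θ / (c * Real.sin (θ - t) + Real.sin t)) ∧
    (∀ t ∈ Set.Icc θ t₀,
      innerSegLen (convexHull ℝ
          ({!₂[0, 0], !₂[1, 0], c • !₂[Real.cos θ, Real.sin θ]} :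
            Set (EuclideanSpace ℝ (Fin 2))))
        !₂[Real.cos t, Real.sin t] =
        c * Real.sin θ / Real.sin t) ∧
    (∀ t ∈ Set.Icc t₀ Real.pi,
      innerSegLen (convexHull ℝ
          ({!₂[0, 0], !₂[1, 0], c • !₂[Real.cos θ, Real.sin θ]} :
            Set (EuclideanSpace ℝ (Fin 2))))
        !₂[Real.cos t, Real.sin t] =
        Real.sin θ / Real.sin (t - θ)) := by
  obtain ⟨hθ0, hθπ⟩ := hθ
  obtain ⟨ht₀θ, ht₀π⟩ := ht₀
  obtain ⟨k, hk, hkeq⟩ := ht₀'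
  have hcos : Real.cos t₀ = k * (c * Real.cos θ - 1) := by
    have h := congrArg (fun v => v 0) hkeq
    simpa [PiLp.smul_apply, PiLp.sub_apply] using h
  have hsin : Real.sin t₀ = k * (c * Real.sin θ) := by
    have h := congrArg (fun v => v 1) hkeq
    simpa [PiLp.smul_apply, PiLp.sub_apply] using h
  have hsθ : 0 < Real.sin θ := Real.sin_pos_of_pos_of_lt_pi hθ0 hθπ
  set Δ := convexHull ℝ ({!₂[0, 0], !₂[1, 0], c • !₂[Real.cos θ, Real.sin θ]} :
      Set (EuclideanSpace ℝ (Fin 2))) with hΔdef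
  have hconv : Convex ℝ Δ := convex_convexHull ℝ _
  have hA : (!₂[0, 0] : EuclideanSpace ℝ (Fin 2)) ∈ Δ := subset_convexHull ℝ _ (by simp)
  have hB : (!₂[1, 0] : EuclideanSpace ℝ (Fin 2)) ∈ Δ := subset_convexHull ℝ _ (by simp)
  have hC : c • (!₂[Real.cos θ, Real.sin θ] : EuclideanSpace ℝ (Fin 2)) ∈ Δ :=
    subset_convexHull ℝ _ (by simp)
  have hkey : ∀ t : ℝ, k * (Real.sin t - c * Real.sin (t - θ)) = Real.sin (t₀ - t) := by
    intro t
    rw [Real.sin_sub, Real.sin_sub, hcos, hsin]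
    ring
  refine ⟨?_, ?_, ?_⟩
  · -- Case 1 : t ∈ [0, θ]
    rintro t ⟨ht0, htθ⟩
    have hst : 0 ≤ Real.sin t := Real.sin_nonneg_of_nonneg_of_le_pi ht0 (htθ.trans hθπ.le)
    have hsθt : 0 ≤ Real.sin (θ - t) :=
      Real.sin_nonneg_of_nonneg_of_le_pi (by linarith) (by linarith)
    have hDpos : 0 < c * Real.sin (θ - t) + Real.sin t := by
      rcases eq_or_lt_of_le ht0 with h | h
      · rw [← h]; simp; positivity
      · have h' : 0 < Real.sin t :=
          Real.sin_pos_of_pos_of_lt_pi h (lt_of_le_of_lt htθ hθπ)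
        nlinarith [mul_nonneg hc.le hsθt]
    set D := c * Real.sin (θ - t) + Real.sin t with hD
    set s := Real.sin t / D with hs
    have hs0 : 0 ≤ s := div_nonneg hst hDpos.le
    have hs1 : s ≤ 1 := by
      rw [hs, div_le_one hDpos]
      nlinarith [mul_nonneg hc.le hsθt]
    apply innerSegLen_master Δ hconv _ (c * Real.sin θ) (1 - c * Real.cos θ)
        0 (c * Real.sin θ) _ ?_ ?_ ?_ (by positivity) !₂[0, 0] hA ?_
    · apply convexHull_min ?_ (convex_strip _ _ _ _)
      rintro p (rfl | rfl | rfl) <;>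
        simp [PiLp.smul_apply, Set.mem_Icc] <;> (try constructor) <;>
          nlinarith [mul_pos hc hsθ]
    · have : c * Real.sin θ * Real.cos t + (1 - c * Real.cos θ) * Real.sin t = D := by
        rw [hD, Real.sin_sub]; ring
      simpa [this] using hDpos
    · have hval : c * Real.sin θ * Real.cos t + (1 - c * Real.cos θ) * Real.sin t = D := by
        rw [hD, Real.sin_sub]; ring
      simp only [PiLp.toLp_apply, Matrix.cons_val_zero, Matrix.cons_val_one, Matrix.head_cons]
      rw [hval]
      field_simp
      ring
    · have hpt : (!₂[0, 0] : EuclideanSpace ℝ (Fin 2)) +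
          (c * Real.sin θ / D) • !₂[Real.cos t, Real.sin t] ∈
          segment ℝ (!₂[1, 0]) (c • !₂[Real.cos θ, Real.sin θ]) := by
        refine ⟨1 - s, s, by linarith, hs0, by ring, ?_⟩
        ext i
        fin_cases i
        · simp [PiLp.add_apply, PiLp.smul_apply, hs]
          rw [hD]
          have hD1 : c * Real.sin (θ - t) + Real.sin t ≠ 0 := hDpos.ne'
          have hD0 : Real.sin t + c * Real.sin (θ - t) ≠ 0 := by rw [add_comm]; exact hD1
          field_simp
          rw [Real.sin_sub]; ring
        · simp [PiLp.add_apply, PiLp.smul_apply, hs]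
          rw [hD]
          field_simp
      exact hconv.segment_subset hB hC hpt
  · -- Case 2 : t ∈ [θ, t₀]
    rintro t ⟨hθt, htt₀⟩
    have hst : 0 < Real.sin t :=
      Real.sin_pos_of_pos_of_lt_pi (lt_of_lt_of_le hθ0 hθt) (lt_of_le_of_lt htt₀ ht₀π)
    have hstθ : 0 ≤ Real.sin (t - θ) :=
      Real.sin_nonneg_of_nonneg_of_le_pi (by linarith) (by linarith)
    have hineq : c * Real.sin (t - θ) ≤ Real.sin t := by
      have h1 : 0 ≤ Real.sin (t₀ - t) :=
        Real.sin_nonneg_of_nonneg_of_le_pi (by linarith) (by linarith)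
      nlinarith [hkey t]
    set s := c * Real.sin (t - θ) / Real.sin t with hs
    have hs0 : 0 ≤ s := div_nonneg (by positivity) hst.le
    have hs1 : s ≤ 1 := by rw [hs, div_le_one hst]; exact hineq
    apply innerSegLen_master Δ hconv _ 0 1 0 (c * Real.sin θ) _ ?_ ?_ ?_ (by positivity)
        !₂[c * Real.sin (t - θ) / Real.sin t, 0] ?_ ?_
    · apply convexHull_min ?_ (convex_strip _ _ _ _)
      rintro p (rfl | rfl | rfl) <;>
        simp [PiLp.smul_apply, Set.mem_Icc] <;> positivity
    · simpa using hst
    · simp only [PiLp.toLp_apply, Matrix.cons_val_zero, Matrix.cons_val_one, Matrix.head_cons]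
      field_simp
      ring
    · have hpt : (!₂[c * Real.sin (t - θ) / Real.sin t, 0] : EuclideanSpace ℝ (Fin 2)) ∈
          segment ℝ (!₂[0, 0]) (!₂[1, 0]) := by
        refine ⟨1 - s, s, by linarith, hs0, by ring, ?_⟩
        ext i
        fin_cases i <;> simp [PiLp.add_apply, PiLp.smul_apply, hs]
      exact hconv.segment_subset hA hB hpt
    · have heq : (!₂[c * Real.sin (t - θ) / Real.sin t, 0] : EuclideanSpace ℝ (Fin 2)) +
          (c * Real.sin θ / Real.sin t) • !₂[Real.cos t, Real.sin t] =
          c • !₂[Real.cos θ, Real.sin θ] := by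
        ext i
        fin_cases i
        · simp [PiLp.add_apply, PiLp.smul_apply]
          field_simp
          rw [Real.sin_sub]; ring
        · simp [PiLp.add_apply, PiLp.smul_apply]
          field_simp
      rw [heq]; exact hC
  · -- Case 3 : t ∈ [t₀, π]
    rintro t ⟨ht₀t, htπ⟩
    have hst : 0 ≤ Real.sin t :=
      Real.sin_nonneg_of_nonneg_of_le_pi (by linarith) htπ
    have hstθ : 0 < Real.sin (t - θ) :=
      Real.sin_pos_of_pos_of_lt_pi (by linarith) (by linarith)
    have hineq : Real.sin t ≤ c * Real.sin (t - θ) := by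
      have h1 : Real.sin (t₀ - t) ≤ 0 := by
        have : Real.sin (t₀ - t) = -Real.sin (t - t₀) := by
          rw [← Real.sin_neg]; ring_nf
        rw [this]
        have : 0 ≤ Real.sin (t - t₀) :=
          Real.sin_nonneg_of_nonneg_of_le_pi (by linarith) (by linarith)
        linarith
      nlinarith [hkey t]
    set s := Real.sin t / (c * Real.sin (t - θ)) with hs
    have hcst : 0 < c * Real.sin (t - θ) := by positivity
    have hs0 : 0 ≤ s := div_nonneg hst hcst.le
    have hs1 : s ≤ 1 := by rw [hs, div_le_one hcst]; exact hineq
    apply innerSegLen_master Δ hconv _ (-Real.sin θ) (Real.cos θ)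
        (-Real.sin θ) 0 _ ?_ ?_ ?_ (by positivity) !₂[1, 0] hB ?_
    · apply convexHull_min ?_ (convex_strip _ _ _ _)
      rintro p (rfl | rfl | rfl) <;>
        simp [PiLp.smul_apply, Set.mem_Icc] <;> (try constructor) <;>
          nlinarith [mul_pos hc hsθ]
    · have hval : -Real.sin θ * Real.cos t + Real.cos θ * Real.sin t = Real.sin (t - θ) := by
        rw [Real.sin_sub]; ring
      simp only [PiLp.toLp_apply, Matrix.cons_val_zero, Matrix.cons_val_one, Matrix.head_cons]
      rw [hval]; exact hstθ
    · have hval : -Real.sin θ * Real.cos t + Real.cos θ * Real.sin t = Real.sin (t - θ) := by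
        rw [Real.sin_sub]; ring
      simp only [PiLp.toLp_apply, Matrix.cons_val_zero, Matrix.cons_val_one, Matrix.head_cons]
      rw [hval]
      field_simp
      ring
    · have hpt : (!₂[1, 0] : EuclideanSpace ℝ (Fin 2)) +
          (Real.sin θ / Real.sin (t - θ)) • !₂[Real.cos t, Real.sin t] ∈
          segment ℝ (!₂[0, 0]) (c • !₂[Real.cos θ, Real.sin θ]) := by
        refine ⟨1 - s, s, by linarith, hs0, by ring, ?_⟩
        ext i
        fin_cases i
        · simp [PiLp.add_apply, PiLp.smul_apply, hs]
          field_simp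
          rw [Real.sin_sub]; ring
        · simp [PiLp.add_apply, PiLp.smul_apply, hs]
          field_simp
      exact hconv.segment_subset hA hC hpt
end

section
/- (Proposition 4.2(ii) / Proposition 4.4(ii).) Let Δ ⊆ ℝ² be a nondegenerate closed triangle, i.e., the convex hull of three affinely independent points. Then the parametrized inner-segment length function χ : ℝ → ℝ defined by χ(t) = d(Δ, (cos t, sin t)) is continuous. -/
section aux

open Set Pointwise

variable {K : Set (EuclideanSpace ℝ (Fin 2))}

/-- For a compact convex set with `0` in the interior of `K - K`, the inner
segment length in a nonzero direction `u` is `(gauge (K - K) u)⁻¹`. -/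
theorem innerSegLen_eq_inv_gauge (hK : Convex ℝ K) (hKc : IsCompact K)
    (hD0 : K - K ∈ nhds (0 : EuclideanSpace ℝ (Fin 2)))
    {u : EuclideanSpace ℝ (Fin 2)} (hu : u ≠ 0) :
    innerSegLen K u = (gauge (K - K) u)⁻¹ := by
  set D : Set (EuclideanSpace ℝ (Fin 2)) := K - K with hD
  have hDc : Convex ℝ D := hK.sub hK
  have hDcpt : IsCompact D := by
    rw [hD, sub_eq_add_neg]; exact hKc.add hKc.neg
  have hDcl : IsClosed D := hDcpt.isClosed
  have hDb : Bornology.IsVonNBounded ℝ D :=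
    NormedSpace.isVonNBounded_of_isBounded _ hDcpt.isBounded
  have habs : Absorbent ℝ D := absorbent_nhds_zero hD0
  have hg : 0 < gauge D u := (gauge_pos habs hDb).2 hu
  have hmemD : ∀ r : ℝ, 0 ≤ r → (r • u ∈ D ↔ r ≤ (gauge D u)⁻¹) := by
    intro r hr
    rw [← hDcl.closure_eq, ← gauge_le_one_iff_mem_closure hDc hD0,
      hDcl.closure_eq, gauge_smul_of_nonneg hr, smul_eq_mul,
      ← le_div_iff₀ hg, one_div]
  have hset : {r : ℝ | 0 ≤ r ∧ ∃ x, segment ℝ x (x + r • u) ⊆ K}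
      = Icc 0 (gauge D u)⁻¹ := by
    ext r
    simp only [mem_setOf_eq, mem_Icc]
    constructor
    · rintro ⟨hr, x, hx⟩
      refine ⟨hr, ?_⟩
      have hx1 : x ∈ K := hx (left_mem_segment ℝ _ _)
      have hx2 : x + r • u ∈ K := hx (right_mem_segment ℝ _ _)
      have : r • u ∈ D := ⟨x + r • u, hx2, x, hx1, add_sub_cancel_left x (r • u)⟩
      exact (hmemD r hr).1 this
    · rintro ⟨hr, hle⟩
      have : r • u ∈ D := (hmemD r hr).2 hle
      obtain ⟨a, ha, b, hb, hab⟩ := this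
      refine ⟨hr, b, ?_⟩
      have : b + r • u = a := by
        have hab' : a - b = r • u := hab
        rw [← hab', add_comm, sub_add_cancel]
      rw [this]
      exact hK.segment_subset hb ha
  rw [innerSegLen, hset, csSup_Icc (by positivity)]

end aux

section main
open Pointwise

/-- Proposition 4.2(ii) / 4.4(ii): for a nondegenerate closed triangle the
parametrized inner-segment length function `χ(t) = d(Δ, (cos t, sin t))`
is continuous. -/
theorem stmt13 (p : Fin 3 → EuclideanSpace ℝ (Fin 2)) (hp : AffineIndependent ℝ p) :
    Continuous fun t : ℝ =>
      innerSegLen (convexHull ℝ (Set.range p)) !₂[Real.cos t, Real.sin t] := by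
  set K : Set (EuclideanSpace ℝ (Fin 2)) := convexHull ℝ (Set.range p) with hKdef
  have hK : Convex ℝ K := convex_convexHull ℝ _
  have hKc : IsCompact K := (Set.finite_range p).isCompact_convexHull ℝ
  -- the affine span is everything
  have hspan : affineSpan ℝ (Set.range p) = ⊤ := by
    rw [hp.affineSpan_eq_top_iff_card_eq_finrank_add_one]
    simp [finrank_euclideanSpace_fin]
  have hint : (interior K).Nonempty := by
    rw [hK.interior_nonempty_iff_affineSpan_eq_top, hKdef, affineSpan_convexHull]
    exact hspan
  obtain ⟨x, hx⟩ := hint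
  have hD0 : K - K ∈ nhds (0 : EuclideanSpace ℝ (Fin 2)) := by
    have hxK : x ∈ K := interior_subset hx
    have hpre : (fun y : EuclideanSpace ℝ (Fin 2) => y + x) ⁻¹' interior K ∈
        nhds (0 : EuclideanSpace ℝ (Fin 2)) :=
      (isOpen_interior.preimage (continuous_add_right x)).mem_nhds (by simpa using hx)
    refine Filter.mem_of_superset hpre ?_
    intro y hy
    exact ⟨y + x, interior_subset hy, x, hxK, add_sub_cancel_right y x⟩
  set D : Set (EuclideanSpace ℝ (Fin 2)) := K - K with hDdef
  have hDcpt : IsCompact D := by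
    rw [hDdef, sub_eq_add_neg]; exact hKc.add hKc.neg
  have hDb : Bornology.IsVonNBounded ℝ D :=
    NormedSpace.isVonNBounded_of_isBounded _ hDcpt.isBounded
  have habs : Absorbent ℝ D := absorbent_nhds_zero hD0
  have hune : ∀ t : ℝ, (!₂[Real.cos t, Real.sin t] : EuclideanSpace ℝ (Fin 2)) ≠ 0 := by
    intro t h
    have h0 : Real.cos t = 0 := by simpa using congrArg (fun v => v 0) h
    have h1 : Real.sin t = 0 := by simpa using congrArg (fun v => v 1) h
    have := Real.sin_sq_add_cos_sq t
    rw [h0, h1] at this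
    norm_num at this
  have heq : (fun t : ℝ => innerSegLen K !₂[Real.cos t, Real.sin t])
      = fun t : ℝ => (gauge D (!₂[Real.cos t, Real.sin t] : EuclideanSpace ℝ (Fin 2)))⁻¹ := by
    funext t
    exact innerSegLen_eq_inv_gauge hK hKc hD0 (hune t)
  rw [heq]
  have hv : Continuous fun t : ℝ => (!₂[Real.cos t, Real.sin t] : EuclideanSpace ℝ (Fin 2)) := by
    apply Continuous.comp (PiLp.continuous_toLp (p := 2) (β := fun _ : Fin 2 => ℝ))
    exact continuous_pi fun i => by
      fin_cases i <;> simp <;> [exact Real.continuous_cos; exact Real.continuous_sin]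
  exact ((continuous_gauge (hK.sub hK) hD0).comp hv).inv₀ fun t =>
    ((gauge_pos habs hDb).2 (hune t)).ne'

end main
end
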